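/- arXiv:2504.17727 — 5 statements merged into one kernel-verified Lean document; each statement's English description precedes it below -/
import Mathlib

section
/- Let K ⊆ ℂ^n be a nonempty compact set. Then for every multi-index α ∈ ℕ^n with |α| ≥ 1, the Chebyshev number satisfies t_K(α) ≥ (τ⁻(K))^{|α|}; that is, every polynomial of the form P(z) = z^α + Σ_{β ≺ α} c_β z^β has sup_{z∈K} |P(z)| ≥ (τ⁻(K))^{|α|}. -/
open MvPolynomial Filter

noncomputable section

/-- `Prec β α` : the multi-index `β` precedes `α` in the graded ordering of the paper:
either `|β| < |α|`, or `|β| = |α|`, `β ≠ α`, and at the smallest index `l` with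
`β l ≠ α l` one has `α l < β l`. -/
def Prec {n : ℕ} (β α : Fin n →₀ ℕ) : Prop :=
  (∑ j, β j) < (∑ j, α j) ∨
    ((∑ j, β j) = (∑ j, α j) ∧
      ∃ l : Fin n, (∀ m, m < l → β m = α m) ∧ α l < β l)

/-- The monic class `𝒫(α)`: polynomials of the form `z ^ α + ∑_{β ≺ α} c_β z ^ β`. -/
def MonicClass {n : ℕ} (α : Fin n →₀ ℕ) (P : MvPolynomial (Fin n) ℂ) : Prop :=
  P.coeff α = 1 ∧ ∀ β : Fin n →₀ ℕ, β ≠ α → P.coeff β ≠ 0 → Prec β α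

/-- The sup-norm `‖P‖_K = sup_{z ∈ K} |P(z)|` of a polynomial on a set `K ⊆ ℂⁿ`. -/
def supNorm {n : ℕ} (K : Set (Fin n → ℂ)) (P : MvPolynomial (Fin n) ℂ) : ℝ :=
  sSup ((fun z => ‖eval z P‖) '' K)

/-- The Chebyshev number `t_K(α) = inf {‖P‖_K : P ∈ 𝒫(α)}`. -/
def chebNumber {n : ℕ} (K : Set (Fin n → ℂ)) (α : Fin n →₀ ℕ) : ℝ :=
  sInf (supNorm K '' {P | MonicClass α P})

/-- `τ⁻(K)`: the liminf of `t_K(α) ^ (1/|α|)` along the cofinite filter on the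
multi-indices `α` with `|α| ≥ 1`. -/
def tauMinus {n : ℕ} (K : Set (Fin n → ℂ)) : ℝ :=
  liminf (fun α : {α : Fin n →₀ ℕ // 1 ≤ ∑ j, α j} =>
    chebNumber K α.1 ^ ((1 : ℝ) / (∑ j, α.1 j : ℕ))) cofinite

/- ### Auxiliary lemmas about `Prec` -/

lemma sum_add_finsupp {n : ℕ} (β γ : Fin n →₀ ℕ) :
    (∑ j, (β + γ) j) = (∑ j, β j) + (∑ j, γ j) := by
  simp [Finsupp.add_apply, Finset.sum_add_distrib]

lemma Prec.irrefl {n : ℕ} (α : Fin n →₀ ℕ) : ¬ Prec α α := by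
  rintro (h | ⟨-, l, -, hl⟩)
  · exact lt_irrefl _ h
  · exact lt_irrefl _ hl

lemma Prec.add_right {n : ℕ} {β α : Fin n →₀ ℕ} (h : Prec β α) (γ : Fin n →₀ ℕ) :
    Prec (β + γ) (α + γ) := by
  rcases h with h | ⟨hs, l, hpre, hl⟩
  · exact Or.inl (by rw [sum_add_finsupp, sum_add_finsupp]; omega)
  · refine Or.inr ⟨by rw [sum_add_finsupp, sum_add_finsupp, hs], l, fun m hm => ?_, ?_⟩
    · simp [Finsupp.add_apply, hpre m hm]
    · simp only [Finsupp.add_apply]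
      omega

lemma Prec.add_left {n : ℕ} {β α : Fin n →₀ ℕ} (h : Prec β α) (γ : Fin n →₀ ℕ) :
    Prec (γ + β) (γ + α) := by
  rw [add_comm γ β, add_comm γ α]; exact h.add_right γ

lemma Prec.trans {n : ℕ} {a b c : Fin n →₀ ℕ} (h1 : Prec a b) (h2 : Prec b c) :
    Prec a c := by
  rcases h1 with h1 | ⟨hs1, l1, hp1, hl1⟩
  · rcases h2 with h2 | ⟨hs2, -⟩
    · exact Or.inl (h1.trans h2)
    · exact Or.inl (hs2 ▸ h1)
  · rcases h2 with h2 | ⟨hs2, l2, hp2, hl2⟩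
    · exact Or.inl (hs1 ▸ h2)
    · refine Or.inr ⟨hs1.trans hs2, ?_⟩
      rcases lt_trichotomy l1 l2 with h | h | h
      · exact ⟨l1, fun m hm => (hp1 m hm).trans (hp2 m (hm.trans h)),
          by rw [← hp2 l1 h]; exact hl1⟩
      · subst h
        exact ⟨l1, fun m hm => (hp1 m hm).trans (hp2 m hm), hl2.trans hl1⟩
      · exact ⟨l2, fun m hm => (hp1 m (hm.trans h)).trans (hp2 m hm),
          by rw [hp1 l2 h]; exact hl2⟩

/-- If `δ ⪯ α` and `ε ⪯ β` with at least one strict, then `δ + ε ≺ α + β`. -/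
lemma Prec.add_of_le {n : ℕ} {δ α ε β : Fin n →₀ ℕ}
    (hd : δ = α ∨ Prec δ α) (he : ε = β ∨ Prec ε β)
    (hne : ¬(δ = α ∧ ε = β)) : Prec (δ + ε) (α + β) := by
  rcases hd with rfl | hd
  · rcases he with rfl | he
    · exact absurd ⟨rfl, rfl⟩ hne
    · exact he.add_left δ
  · rcases he with rfl | he
    · exact hd.add_right ε
    · exact (hd.add_right ε).trans (he.add_left α)

/- ### The monic class is closed under multiplication -/

lemma MonicClass.mul {n : ℕ} {α β : Fin n →₀ ℕ} {P Q : MvPolynomial (Fin n) ℂ}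
    (hP : MonicClass α P) (hQ : MonicClass β Q) : MonicClass (α + β) (P * Q) := by
  classical
  have key : ∀ x : (Fin n →₀ ℕ) × (Fin n →₀ ℕ), P.coeff x.1 ≠ 0 → Q.coeff x.2 ≠ 0 →
      ¬(x.1 = α ∧ x.2 = β) → Prec (x.1 + x.2) (α + β) := by
    intro x hx1 hx2 hne
    refine Prec.add_of_le ?_ ?_ hne
    · by_cases h : x.1 = α
      · exact Or.inl h
      · exact Or.inr (hP.2 _ h hx1)
    · by_cases h : x.2 = β
      · exact Or.inl h
      · exact Or.inr (hQ.2 _ h hx2)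
  constructor
  · rw [coeff_mul]
    have hsingle : ∑ x ∈ Finset.HasAntidiagonal.antidiagonal (α + β), P.coeff x.1 * Q.coeff x.2
        = P.coeff (α, β).1 * Q.coeff (α, β).2 := by
      apply Finset.sum_eq_single_of_mem (α, β) (Finset.HasAntidiagonal.mem_antidiagonal.mpr rfl)
      intro x hx hxne
      by_cases h1 : P.coeff x.1 = 0
      · rw [h1, zero_mul]
      by_cases h2 : Q.coeff x.2 = 0
      · rw [h2, mul_zero]
      exfalso
      have hmem := Finset.HasAntidiagonal.mem_antidiagonal.mp hx
      have : Prec (α + β) (α + β) := by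
        have := key x h1 h2 (by
          intro ⟨ha, hb⟩
          exact hxne (Prod.ext ha hb))
        rwa [hmem] at this
      exact Prec.irrefl _ this
    rw [hsingle, hP.1, hQ.1, one_mul]
  · intro γ hγ hc
    rw [coeff_mul] at hc
    obtain ⟨x, hx, hxne⟩ := Finset.exists_ne_zero_of_sum_ne_zero hc
    have h1 : P.coeff x.1 ≠ 0 := fun h => hxne (by rw [h, zero_mul])
    have h2 : Q.coeff x.2 ≠ 0 := fun h => hxne (by rw [h, mul_zero])
    have hmem := Finset.HasAntidiagonal.mem_antidiagonal.mp hx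
    have hne : ¬(x.1 = α ∧ x.2 = β) := by
      rintro ⟨ha, hb⟩
      exact hγ (by rw [← hmem, ha, hb])
    have := key x h1 h2 hne
    rwa [hmem] at this

lemma MonicClass.pow {n : ℕ} {α : Fin n →₀ ℕ} {P : MvPolynomial (Fin n) ℂ}
    (hP : MonicClass α P) : ∀ k : ℕ, MonicClass ((k + 1) • α) (P ^ (k + 1)) := by
  intro k
  induction k with
  | zero => simpa using hP
  | succ k ih =>
      have hsm : (k + 1 + 1) • α = (k + 1) • α + α := succ_nsmul α (k + 1)
      rw [hsm, pow_succ]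
      exact ih.mul hP

lemma monicClass_monomial {n : ℕ} (α : Fin n →₀ ℕ) :
    MonicClass α (monomial α (1 : ℂ)) := by
  classical
  constructor
  · simp [coeff_monomial]
  · intro β hβ hc
    rw [coeff_monomial] at hc
    simp [Ne.symm hβ] at hc

/- ### Analytic lemmas about `supNorm` and `chebNumber` -/

section Analytic

variable {n : ℕ} {K : Set (Fin n → ℂ)}

lemma le_supNorm (hKc : IsCompact K) (P : MvPolynomial (Fin n) ℂ)
    {z : Fin n → ℂ} (hz : z ∈ K) : ‖eval z P‖ ≤ supNorm K P := by
  apply le_csSup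
  · exact (hKc.bddAbove_image ((continuous_norm.comp
      (MvPolynomial.continuous_eval P)).continuousOn))
  · exact Set.mem_image_of_mem _ hz

lemma supNorm_nonneg (hKne : K.Nonempty) (hKc : IsCompact K)
    (P : MvPolynomial (Fin n) ℂ) : 0 ≤ supNorm K P := by
  obtain ⟨z, hz⟩ := hKne
  exact (norm_nonneg _).trans (le_supNorm hKc P hz)

lemma supNorm_pow_le (hKne : K.Nonempty) (hKc : IsCompact K)
    (P : MvPolynomial (Fin n) ℂ) (k : ℕ) :
    supNorm K (P ^ k) ≤ supNorm K P ^ k := by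
  apply Real.sSup_le
  · rintro y ⟨z, hz, rfl⟩
    simp only [map_pow, norm_pow]
    exact pow_le_pow_left₀ (norm_nonneg _) (le_supNorm hKc P hz) k
  · exact pow_nonneg (supNorm_nonneg hKne hKc P) k

lemma chebNumber_nonneg (hKne : K.Nonempty) (hKc : IsCompact K) (α : Fin n →₀ ℕ) :
    0 ≤ chebNumber K α := by
  apply Real.sInf_nonneg
  rintro y ⟨P, -, rfl⟩
  exact supNorm_nonneg hKne hKc P

lemma chebNumber_le (hKne : K.Nonempty) (hKc : IsCompact K)
    {α : Fin n →₀ ℕ} {P : MvPolynomial (Fin n) ℂ} (hP : MonicClass α P) :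
    chebNumber K α ≤ supNorm K P := by
  apply csInf_le
  · exact ⟨0, by rintro y ⟨Q, -, rfl⟩; exact supNorm_nonneg hKne hKc Q⟩
  · exact ⟨P, hP, rfl⟩

end Analytic

/-- for a nonempty compact `K ⊆ ℂⁿ` and any multi-index `α` with `|α| ≥ 1`,
`t_K(α) ≥ τ⁻(K) ^ |α|`; that is, every `P ∈ 𝒫(α)` has `‖P‖_K ≥ τ⁻(K) ^ |α|`. -/
theorem chebNumber_ge_tauMinus_pow {n : ℕ} (K : Set (Fin n → ℂ))
    (hKne : K.Nonempty) (hKc : IsCompact K)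
    (α : Fin n →₀ ℕ) (hα : 1 ≤ ∑ j, α j) :
    chebNumber K α ≥ tauMinus K ^ (∑ j, α j) ∧
      ∀ P : MvPolynomial (Fin n) ℂ, MonicClass α P →
        supNorm K P ≥ tauMinus K ^ (∑ j, α j) := by
  set m : ℕ := ∑ j, α j with hm
  set f : {β : Fin n →₀ ℕ // 1 ≤ ∑ j, β j} → ℝ :=
    fun β => chebNumber K β.1 ^ ((1 : ℝ) / (∑ j, β.1 j : ℕ)) with hf
  have hf_nonneg : ∀ β, 0 ≤ f β := fun β =>
    Real.rpow_nonneg (chebNumber_nonneg hKne hKc β.1) _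
  have hsum_smul : ∀ k : ℕ, (∑ j, ((k • α) j)) = k * m := by
    intro k
    simp [Finsupp.smul_apply, hm, Finset.mul_sum]
  -- main claim
  have main : ∀ P : MvPolynomial (Fin n) ℂ, MonicClass α P →
      supNorm K P ≥ tauMinus K ^ m := by
    intro P hP
    set S : ℝ := supNorm K P with hS
    have hS0 : 0 ≤ S := supNorm_nonneg hKne hKc P
    have hm0 : (0 : ℝ) < (m : ℝ) := by exact_mod_cast hα
    -- the subsequence of multiples of α
    have hmem : ∀ k : ℕ, 1 ≤ ∑ j, ((k + 1) • α) j := by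
      intro k
      rw [hsum_smul]
      calc 1 ≤ m := hα
        _ ≤ (k + 1) * m := Nat.le_mul_of_pos_left m (Nat.succ_pos k)
    set g : ℕ → {β : Fin n →₀ ℕ // 1 ≤ ∑ j, β j} :=
      fun k => ⟨(k + 1) • α, hmem k⟩ with hg
    have hg_inj : Function.Injective g := by
      intro a b hab
      have : (∑ j, ((a + 1) • α) j) = (∑ j, ((b + 1) • α) j) := by
        rw [show (a + 1) • α = (g a).1 from rfl, show (b + 1) • α = (g b).1 from rfl, hab]
      rw [hsum_smul, hsum_smul] at this
      have hmpos : 0 < m := hα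
      have := Nat.eq_of_mul_eq_mul_right hmpos this
      omega
    -- bound along the subsequence
    have hbound : ∀ k : ℕ, f (g k) ≤ S ^ ((1 : ℝ) / m) := by
      intro k
      have hcheb : chebNumber K ((k + 1) • α) ≤ S ^ (k + 1) :=
        (chebNumber_le hKne hKc (hP.pow k)).trans (supNorm_pow_le hKne hKc P (k + 1))
      have hexp0 : (0 : ℝ) ≤ (1 : ℝ) / (∑ j, ((k + 1) • α) j : ℕ) := by positivity
      have h1 : f (g k) ≤ (S ^ (k + 1)) ^ ((1 : ℝ) / (∑ j, ((k + 1) • α) j : ℕ)) := by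
        exact Real.rpow_le_rpow (chebNumber_nonneg hKne hKc _) hcheb hexp0
      refine h1.trans_eq ?_
      rw [hsum_smul]
      have hk1 : ((k + 1 : ℕ) : ℝ) ≠ 0 := by positivity
      have hmne : ((m : ℕ) : ℝ) ≠ 0 := ne_of_gt hm0
      rw [← Real.rpow_natCast S (k + 1), ← Real.rpow_mul hS0]
      congr 1
      push_cast
      field_simp
    -- frequently along the cofinite filter
    have hfreq : ∃ᶠ β in (cofinite :
        Filter {β : Fin n →₀ ℕ // 1 ≤ ∑ j, β j}), f β ≤ S ^ ((1 : ℝ) / m) := by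
      rw [frequently_cofinite_iff_infinite]
      apply Set.Infinite.mono (s := Set.range g)
      · rintro x ⟨k, rfl⟩
        exact hbound k
      · exact Set.infinite_range_of_injective hg_inj
    have hbdd : IsBoundedUnder (· ≥ ·) (cofinite :
        Filter {β : Fin n →₀ ℕ // 1 ≤ ∑ j, β j}) f :=
      isBoundedUnder_of ⟨0, fun x => hf_nonneg x⟩
    have htau_le : tauMinus K ≤ S ^ ((1 : ℝ) / m) :=
      liminf_le_of_frequently_le hfreq hbdd
    have htau0 : 0 ≤ tauMinus K := by
      apply le_liminf_of_le
      · exact IsCoboundedUnder.of_frequently_le hfreq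
      · exact Eventually.of_forall hf_nonneg
    calc tauMinus K ^ m ≤ (S ^ ((1 : ℝ) / m)) ^ m := pow_le_pow_left₀ htau0 htau_le m
      _ = S := by
          rw [← Real.rpow_natCast (S ^ ((1 : ℝ) / m)) m, ← Real.rpow_mul hS0]
          rw [one_div_mul_cancel (ne_of_gt hm0), Real.rpow_one]
  refine ⟨?_, main⟩
  apply le_csInf
  · exact ⟨supNorm K (monomial α 1), ⟨monomial α 1, monicClass_monomial α, rfl⟩⟩
  · rintro b ⟨P, hP, rfl⟩
    exact main P hP
end
end

section
/- Let K = {(z_1,z_2) ∈ ℂ² : |z_1|² + |z_2|² ≤ 1} be the closed Euclidean unit ball in ℂ² and let α ∈ ℕ² with |α| = d ≥ 1. Then every polynomial P in the monic class 𝒫(α) satisfies sup_{z∈K} |P(z)| ≥ (√2/2)^d = 2^{−d/2}. -/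
open MvPolynomial Filter

noncomputable section

lemma sum_zeta_pow (N : ℕ) (hN : 0 < N) (m : ℤ) :
    ∑ j ∈ Finset.range N, Complex.exp (2 * Real.pi * Complex.I / N) ^ ((j : ℤ) * m) =
      if (N : ℤ) ∣ m then (N : ℂ) else 0 := by
  set ζ := Complex.exp (2 * Real.pi * Complex.I / N) with hζ
  have hprim : IsPrimitiveRoot ζ N := Complex.isPrimitiveRoot_exp N hN.ne'
  by_cases hdvd : (N : ℤ) ∣ m
  · rw [if_pos hdvd]
    have h1 : ∀ j ∈ Finset.range N, ζ ^ ((j : ℤ) * m) = 1 := by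
      intro j _
      have : ζ ^ m = 1 := (hprim.zpow_eq_one_iff_dvd m).mpr hdvd
      rw [mul_comm, zpow_mul, this, one_zpow]
    rw [Finset.sum_congr rfl h1]
    simp
  · rw [if_neg hdvd]
    have hx : ζ ^ m ≠ 1 := fun h => hdvd ((hprim.zpow_eq_one_iff_dvd m).mp h)
    have h1 : ∀ j ∈ Finset.range N, ζ ^ ((j : ℤ) * m) = (ζ ^ m) ^ j := by
      intro j _
      rw [mul_comm, zpow_mul, zpow_natCast]
    rw [Finset.sum_congr rfl h1, geom_sum_eq hx]
    have : (ζ ^ m) ^ N = 1 := by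
      rw [← zpow_natCast, ← zpow_mul, mul_comm, zpow_mul, zpow_natCast, hprim.pow_eq_one, one_zpow]
    rw [this]
    simp

/-- on the closed Euclidean unit ball of `ℂ²`, every `P ∈ 𝒫(α)` with
`|α| = d ≥ 1` satisfies `‖P‖_K ≥ (√2/2)^d`. -/
theorem euclidean_ball_cheb_lower {d : ℕ} (hd1 : 1 ≤ d) (α : Fin 2 →₀ ℕ)
    (hα : ∑ j, α j = d)
    (P : MvPolynomial (Fin 2) ℂ) (hP : MonicClass α P) :
    supNorm {z : Fin 2 → ℂ | ‖z 0‖ ^ 2 + ‖z 1‖ ^ 2 ≤ 1} P ≥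
      (Real.sqrt 2 / 2) ^ d := by
  classical
  set K : Set (Fin 2 → ℂ) :=
    {z : Fin 2 → ℂ | ‖z 0‖ ^ 2 + ‖z 1‖ ^ 2 ≤ 1} with hK
  set r : ℝ := Real.sqrt 2 / 2 with hr
  have hr0 : 0 ≤ r := by positivity
  have hr2 : r ^ 2 = 1 / 2 := by
    rw [hr, div_pow, Real.sq_sqrt (by norm_num : (0:ℝ) ≤ 2)]
    norm_num
  -- N larger than every exponent involved
  set N : ℕ := P.totalDegree + 1 with hN
  have hN0 : 0 < N := Nat.succ_pos _
  set ζ : ℂ := Complex.exp (2 * Real.pi * Complex.I / N) with hζ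
  have hζabs : ‖ζ‖ = 1 := by
    have h : (2 * (Real.pi : ℂ) * Complex.I / N) = ((2 * Real.pi / N : ℝ) : ℂ) * Complex.I := by
      push_cast; ring
    rw [hζ, h, Complex.norm_exp_ofReal_mul_I]
  have hζ0 : ζ ≠ 0 := by
    intro h
    rw [h] at hζabs
    simp at hζabs
  -- the grid points
  set z : ℕ → ℕ → (Fin 2 → ℂ) := fun j l => ![(r : ℂ) * ζ ^ j, (r : ℂ) * ζ ^ l] with hz
  have habsz : ∀ j : ℕ, ‖(r : ℂ) * ζ ^ j‖ = r := by
    intro j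
    rw [norm_mul, norm_pow, hζabs, one_pow, mul_one, Complex.norm_real, Real.norm_of_nonneg hr0]
  have hmem : ∀ j l, z j l ∈ K := by
    intro j l
    show ‖z j l 0‖ ^ 2 + ‖z j l 1‖ ^ 2 ≤ 1
    simp only [hz, Matrix.cons_val_zero, Matrix.cons_val_one, Matrix.head_cons]
    rw [habsz, habsz, hr2]
    norm_num
  -- boundedness of the values of |P| on K
  have hKclosed : IsClosed K := by
    have : K = (fun w : Fin 2 → ℂ =>
        ‖w 0‖ ^ 2 + ‖w 1‖ ^ 2) ⁻¹' Set.Iic 1 := rfl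
    rw [this]
    refine IsClosed.preimage ?_ isClosed_Iic
    exact ((continuous_norm.comp (continuous_apply 0)).pow 2).add
      ((continuous_norm.comp (continuous_apply 1)).pow 2)
  have hKbdd : Bornology.IsBounded K := by
    apply (Metric.isBounded_closedBall (x := (0 : Fin 2 → ℂ)) (r := 1)).subset
    intro w hw
    rw [Metric.mem_closedBall, dist_zero_right]
    rw [pi_norm_le_iff_of_nonneg (by norm_num)]
    have hw' : ‖w 0‖ ^ 2 + ‖w 1‖ ^ 2 ≤ 1 := hw
    intro i
    have h0 : (0:ℝ) ≤ ‖w 0‖ := norm_nonneg _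
    have h1 : (0:ℝ) ≤ ‖w 1‖ := norm_nonneg _
    fin_cases i
    · show ‖w 0‖ ≤ 1
      nlinarith
    · show ‖w 1‖ ≤ 1
      nlinarith
  have hKcomp : IsCompact K := Metric.isCompact_of_isClosed_isBounded hKclosed hKbdd
  have hcont : Continuous (fun w : Fin 2 → ℂ => ‖eval w P‖) :=
    continuous_norm.comp (MvPolynomial.continuous_eval P)
  have hBdd : BddAbove ((fun w : Fin 2 → ℂ => ‖eval w P‖) '' K) :=
    (hKcomp.image hcont).bddAbove
  have hle : ∀ w ∈ K, ‖eval w P‖ ≤ supNorm K P := by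
    intro w hw
    exact le_csSup hBdd ⟨w, hw, rfl⟩
  -- exponent bounds
  have hαsupp : α ∈ P.support := by
    rw [MvPolynomial.mem_support_iff, hP.1]
    exact one_ne_zero
  have hbound : ∀ β ∈ P.support, ∀ i : Fin 2, β i < N := by
    intro β hβ i
    have h1 : β i ≤ ∑ j, β j := Finset.single_le_sum (fun _ _ => Nat.zero_le _) (Finset.mem_univ i)
    have h2 : (∑ j, β j) ≤ P.totalDegree := by
      rw [← Finsupp.sum_fintype β (fun _ e => e) (fun _ => rfl)]
      exact MvPolynomial.le_totalDegree hβ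
    omega
  -- the key Fourier sum
  set S : ℂ := ∑ j ∈ Finset.range N, ∑ l ∈ Finset.range N,
      ζ ^ (-((j : ℤ) * (α 0) + (l : ℤ) * (α 1))) * eval (z j l) P with hS
  -- Claim A : S = N^2 * r^d
  have claimA : S = (N : ℂ) ^ 2 * (r : ℂ) ^ d := by
    have hterm : ∀ j ∈ Finset.range N, ∀ l ∈ Finset.range N,
        ζ ^ (-((j : ℤ) * (α 0) + (l : ℤ) * (α 1))) * eval (z j l) P =
        ∑ β ∈ P.support, (P.coeff β * (r : ℂ) ^ (β 0 + β 1)) *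
          (ζ ^ ((j : ℤ) * ((β 0 : ℤ) - (α 0 : ℤ))) *
           ζ ^ ((l : ℤ) * ((β 1 : ℤ) - (α 1 : ℤ)))) := by
      intro j _ l _
      rw [MvPolynomial.eval_eq', Finset.mul_sum]
      apply Finset.sum_congr rfl
      intro β hβ
      have hprod : (∏ i, z j l i ^ β i) = ((r:ℂ) * ζ ^ j) ^ (β 0) * ((r:ℂ) * ζ ^ l) ^ (β 1) := by
        rw [Fin.prod_univ_two]
        simp [hz]
      rw [hprod]
      rw [mul_pow, mul_pow]
      have e1 : (ζ ^ j) ^ (β 0) = ζ ^ ((j : ℤ) * (β 0 : ℤ)) := by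
        rw [← pow_mul, ← zpow_natCast]
        push_cast
        ring_nf
      have e2 : (ζ ^ l) ^ (β 1) = ζ ^ ((l : ℤ) * (β 1 : ℤ)) := by
        rw [← pow_mul, ← zpow_natCast]
        push_cast
        ring_nf
      rw [e1, e2]
      rw [neg_add, zpow_add₀ hζ0]
      have e3 : ζ ^ ((j : ℤ) * ((β 0 : ℤ) - (α 0 : ℤ))) =
          ζ ^ (-((j:ℤ) * (α 0 : ℤ))) * ζ ^ ((j : ℤ) * (β 0 : ℤ)) := by
        rw [← zpow_add₀ hζ0]; ring_nf
      have e4 : ζ ^ ((l : ℤ) * ((β 1 : ℤ) - (α 1 : ℤ))) =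
          ζ ^ (-((l:ℤ) * (α 1 : ℤ))) * ζ ^ ((l : ℤ) * (β 1 : ℤ)) := by
        rw [← zpow_add₀ hζ0]; ring_nf
      rw [e3, e4, pow_add]
      ring
    set c : (Fin 2 →₀ ℕ) → ℂ := fun β => P.coeff β * (r : ℂ) ^ (β 0 + β 1) with hc
    set g : (Fin 2 →₀ ℕ) → ℕ → ℂ := fun β j => ζ ^ ((j : ℤ) * ((β 0 : ℤ) - (α 0 : ℤ))) with hg
    set h : (Fin 2 →₀ ℕ) → ℕ → ℂ := fun β l => ζ ^ ((l : ℤ) * ((β 1 : ℤ) - (α 1 : ℤ))) with hh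
    have key : ∑ β ∈ P.support, ∑ j ∈ Finset.range N, ∑ l ∈ Finset.range N,
          c β * (g β j * h β l)
        = ∑ j ∈ Finset.range N, ∑ l ∈ Finset.range N, ∑ β ∈ P.support,
          c β * (g β j * h β l) := by
      rw [Finset.sum_comm]
      exact Finset.sum_congr rfl fun j _ => Finset.sum_comm
    have step1 : S = ∑ β ∈ P.support, c β * ((∑ j ∈ Finset.range N, g β j) *
        (∑ l ∈ Finset.range N, h β l)) := by
      rw [hS]
      rw [Finset.sum_congr rfl (fun j hj => Finset.sum_congr rfl (fun l hl => hterm j hj l hl))]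
      rw [← key]
      apply Finset.sum_congr rfl
      intro β _
      rw [Finset.sum_mul_sum]
      simp only [Finset.mul_sum]
    rw [step1]
    -- evaluate the geometric sums
    have hgsum : ∀ β ∈ P.support, (∑ j ∈ Finset.range N, g β j) =
        if β 0 = α 0 then (N : ℂ) else 0 := by
      intro β hβ
      rw [hg]
      simp only
      rw [sum_zeta_pow N hN0]
      congr 1
      rw [eq_iff_iff]
      constructor
      · intro hdvd
        by_contra hne
        have hm0 : ((β 0 : ℤ) - (α 0 : ℤ)) ≠ 0 := by
          intro hcon; apply hne; omega
        have h1 : (N : ℤ) ≤ |(β 0 : ℤ) - (α 0 : ℤ)| :=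
          Int.le_of_dvd (abs_pos.mpr hm0) ((dvd_abs _ _).mpr hdvd)
        have h2 : (β 0 : ℕ) < N := hbound β hβ 0
        have h3 : (α 0 : ℕ) < N := hbound α hαsupp 0
        have h4 : |(β 0 : ℤ) - (α 0 : ℤ)| < (N : ℤ) := by
          rw [abs_lt]; constructor <;> omega
        exact absurd h4 (not_lt.mpr h1)
      · intro heq
        rw [heq]
        simp
    have hhsum : ∀ β ∈ P.support, (∑ l ∈ Finset.range N, h β l) =
        if β 1 = α 1 then (N : ℂ) else 0 := by
      intro β hβ
      rw [hh]
      simp only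
      rw [sum_zeta_pow N hN0]
      congr 1
      rw [eq_iff_iff]
      constructor
      · intro hdvd
        by_contra hne
        have hm0 : ((β 1 : ℤ) - (α 1 : ℤ)) ≠ 0 := by
          intro hcon; apply hne; omega
        have h1 : (N : ℤ) ≤ |(β 1 : ℤ) - (α 1 : ℤ)| :=
          Int.le_of_dvd (abs_pos.mpr hm0) ((dvd_abs _ _).mpr hdvd)
        have h2 : (β 1 : ℕ) < N := hbound β hβ 1
        have h3 : (α 1 : ℕ) < N := hbound α hαsupp 1
        have h4 : |(β 1 : ℤ) - (α 1 : ℤ)| < (N : ℤ) := by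
          rw [abs_lt]; constructor <;> omega
        exact absurd h4 (not_lt.mpr h1)
      · intro heq
        rw [heq]
        simp
    rw [Finset.sum_congr rfl (fun β hβ => by rw [hgsum β hβ, hhsum β hβ])]
    rw [Finset.sum_eq_single α]
    · rw [if_pos rfl, if_pos rfl, hc]
      simp only
      rw [hP.1]
      have : α 0 + α 1 = d := by rw [← hα, Fin.sum_univ_two]
      rw [this]
      ring
    · intro β _ hβα
      have : β 0 ≠ α 0 ∨ β 1 ≠ α 1 := by
        by_contra hcon
        push_neg at hcon
        apply hβα
        ext i
        fin_cases i
        · exact hcon.1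
        · exact hcon.2
      rcases this with hne | hne
      · rw [if_neg hne]; ring
      · rw [if_neg hne]; ring
    · intro hα'
      exact absurd hαsupp hα'
  -- Claim B : |S| ≤ N^2 * supNorm K P
  have claimB : ‖S‖ ≤ (N : ℝ) ^ 2 * supNorm K P := by
    rw [hS]
    calc ‖∑ j ∈ Finset.range N, ∑ l ∈ Finset.range N,
          ζ ^ (-((j : ℤ) * (α 0) + (l : ℤ) * (α 1))) * eval (z j l) P‖
        ≤ ∑ j ∈ Finset.range N, ‖∑ l ∈ Finset.range N,
          ζ ^ (-((j : ℤ) * (α 0) + (l : ℤ) * (α 1))) * eval (z j l) P‖ := by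
          exact norm_sum_le _ _
      _ ≤ ∑ j ∈ Finset.range N, ∑ l ∈ Finset.range N,
          ‖ζ ^ (-((j : ℤ) * (α 0) + (l : ℤ) * (α 1))) * eval (z j l) P‖ := by
          exact Finset.sum_le_sum fun j _ => norm_sum_le _ _
      _ ≤ ∑ j ∈ Finset.range N, ∑ l ∈ Finset.range N, supNorm K P := by
          apply Finset.sum_le_sum
          intro j _
          apply Finset.sum_le_sum
          intro l _
          rw [norm_mul, norm_zpow, hζabs, one_zpow, one_mul]
          exact hle (z j l) (hmem j l)
      _ = (N : ℝ) ^ 2 * supNorm K P := by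
          simp [Finset.sum_const, Finset.card_range]
          ring
  -- conclude
  have habsS : ‖S‖ = (N : ℝ) ^ 2 * r ^ d := by
    rw [claimA, norm_mul, norm_pow, norm_pow, Complex.norm_natCast, Complex.norm_real,
      Real.norm_of_nonneg hr0]
  rw [habsS] at claimB
  have hN2 : (0 : ℝ) < (N : ℝ) ^ 2 := by positivity
  have := le_of_mul_le_mul_left (by linarith [claimB] : (N : ℝ) ^ 2 * r ^ d ≤ (N : ℝ) ^ 2 * supNorm K P) hN2
  exact this
end
end

section
/- For each j = 1,…,n let K_j ⊂ ℂ be a nonempty compact set and μ_j a finite positive Borel measure on K_j, and let μ = μ_1 ⊗ ⋯ ⊗ μ_n on K = K_1 × ⋯ × K_n. Let α ∈ ℕ^n and for each j let P_j be a monic polynomial of degree α_j orthogonal in L²(μ_j) to every polynomial of degree strictly less than α_j (with P_j = 1 when α_j = 0). Then ‖Π_{j=1}^n P_j(z_j)‖_{L²(μ)} = Π_{j=1}^n ‖P_j‖_{L²(μ_j)}, and for every polynomial P in the monic class 𝒫(α) one has ‖P‖_{L²(μ)} ≥ Π_{j=1}^n ‖P_j‖_{L²(μ_j)}; i.e.,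 the product Π_j P_j(z_j) is a monic orthogonal polynomial minimizing the L²(μ) norm over 𝒫(α). -/
open MvPolynomial Filter

noncomputable section

/-- Auxiliary: square root of a finite product of nonnegative reals. -/
private lemma sqrt_finset_prod {ι : Type*} (s : Finset ι) (f : ι → ℝ) (hf : ∀ i, 0 ≤ f i) :
    Real.sqrt (∏ i ∈ s, f i) = ∏ i ∈ s, Real.sqrt (f i) := by
  classical
  induction s using Finset.induction_on with
  | empty => simp
  | @insert a s h ih =>
      rw [Finset.prod_insert h, Finset.prod_insert h, Real.sqrt_mul (hf _), ih]

/-- Auxiliary: a preceding multi-index is strictly smaller in some coordinate. -/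
private lemma Prec.exists_coord_lt {n : ℕ} {β α : Fin n →₀ ℕ} (h : Prec β α) :
    ∃ k, β k < α k := by
  by_contra hc
  push_neg at hc
  rcases h with h | ⟨hsum, l, -, hl⟩
  · exact absurd (Finset.sum_le_sum fun j _ => hc j) (not_le.mpr h)
  · exact absurd hsum.symm
      (ne_of_lt (Finset.sum_lt_sum (fun j _ => hc j) ⟨l, Finset.mem_univ l, hl⟩))

open MeasureTheory in
/-- Auxiliary Fubini-type theorem for `Measure.pi` with explicit measures. -/
private lemma pi_integral_prod {𝕜 : Type*} [RCLike 𝕜] : ∀ {n : ℕ} (μ : Fin n → Measure ℂ)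
    [∀ i, SigmaFinite (μ i)] (f : Fin n → ℂ → 𝕜),
    ∫ z : Fin n → ℂ, ∏ i, f i (z i) ∂(Measure.pi μ) = ∏ i, ∫ t, f i t ∂(μ i) := by
  intro n
  induction n with
  | zero => intro μ _ f; rw [Measure.pi_of_empty μ]; simp
  | succ m ih =>
      intro μ _ f
      rw [← ((measurePreserving_piFinSuccAbove μ 0).symm).integral_comp']
      simp_rw [MeasurableEquiv.piFinSuccAbove_symm_apply, Fin.insertNthEquiv,
        Fin.prod_univ_succ, Fin.insertNth_zero, Equiv.coe_fn_mk, Fin.cons_succ,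
        Fin.zero_succAbove, cast_eq, Fin.cons_zero]
      rw [← ih (fun i => μ i.succ) (fun i => f i.succ), ← integral_prod_mul]

open MeasureTheory in
/-- Auxiliary integrability of products on `Measure.pi`. -/
private lemma pi_integrable_prod {𝕜 : Type*} [RCLike 𝕜] : ∀ {n : ℕ} (μ : Fin n → Measure ℂ)
    [∀ i, IsFiniteMeasure (μ i)] {f : Fin n → ℂ → 𝕜}, (∀ i, Integrable (f i) (μ i)) →
    Integrable (fun z : Fin n → ℂ => ∏ i, f i (z i)) (Measure.pi μ) := by
  intro n
  induction n with
  | zero =>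
      intro μ _ f _
      simp only [Finset.univ_eq_empty, Finset.prod_empty]
      exact integrable_const _
  | succ m ih =>
      intro μ _ f hf
      have h := (measurePreserving_piFinSuccAbove μ 0).symm
      rw [← h.integrable_comp_emb (MeasurableEquiv.measurableEmbedding _)]
      simp_rw [Function.comp_def, MeasurableEquiv.piFinSuccAbove_symm_apply, Fin.insertNthEquiv,
        Fin.prod_univ_succ, Fin.insertNth_zero, Equiv.coe_fn_mk, Fin.cons_succ,
        Fin.zero_succAbove, cast_eq, Fin.cons_zero]
      exact Integrable.mul_prod (hf 0) (ih (fun i => μ i.succ) (fun i => hf i.succ))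

open MeasureTheory in
/-- A continuous function is in every `ℒᵖ` space of a finite measure carried by a compact set. -/
private lemma memLp_of_compact {X : Type*} [TopologicalSpace X] [MeasurableSpace X]
    [OpensMeasurableSpace X] {μ : Measure X} [IsFiniteMeasure μ] {S : Set X}
    (hS : IsCompact S) (hμS : ∀ᵐ x ∂μ, x ∈ S) {f : X → ℂ} (hf : Continuous f) (p : ENNReal) :
    MemLp f p μ := by
  obtain ⟨C, hC⟩ := hS.exists_bound_of_continuousOn hf.continuousOn
  exact MemLp.of_bound hf.aestronglyMeasurable C
    (by filter_upwards [hμS] with x hx using hC x hx)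

open MeasureTheory in
/-- the `L²(μ₁ ⊗ ⋯ ⊗ μₙ)` norm of the product of univariate monic
orthogonal polynomials factorizes, and this product minimizes the `L²` norm over the
monic class `𝒫(α)`. -/
theorem prod_orthogonal_l2_minimal {n : ℕ}
    (K : Fin n → Set ℂ) (hKc : ∀ j, IsCompact (K j)) (hKne : ∀ j, (K j).Nonempty)
    (μ : Fin n → Measure ℂ) [∀ j, IsFiniteMeasure (μ j)]
    (hμ : ∀ j, μ j (K j)ᶜ = 0)
    (α : Fin n →₀ ℕ)
    (P : Fin n → Polynomial ℂ)
    (hmonic : ∀ j, (P j).Monic) (hdeg : ∀ j, (P j).natDegree = α j)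
    (horth : ∀ j, ∀ q : Polynomial ℂ, q.degree < ((α j : ℕ) : WithBot ℕ) →
      ∫ t, (P j).eval t * (starRingEnd ℂ) (q.eval t) ∂(μ j) = 0) :
    Real.sqrt (∫ z : Fin n → ℂ, ‖∏ j, (P j).eval (z j)‖ ^ 2 ∂(Measure.pi μ)) =
        ∏ j, Real.sqrt (∫ t, ‖(P j).eval t‖ ^ 2 ∂(μ j)) ∧
      ∀ Q : MvPolynomial (Fin n) ℂ, MonicClass α Q →
        Real.sqrt (∫ z : Fin n → ℂ, ‖eval z Q‖ ^ 2 ∂(Measure.pi μ)) ≥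
          ∏ j, Real.sqrt (∫ t, ‖(P j).eval t‖ ^ 2 ∂(μ j)) := by
  classical
  -- notation
  have hNnn : ∀ j, (0:ℝ) ≤ ∫ t, ‖(P j).eval t‖ ^ 2 ∂(μ j) :=
    fun j => integral_nonneg fun t => sq_nonneg _
  have haeK : ∀ j, ∀ᵐ t ∂(μ j), t ∈ K j := by
    intro j
    rw [ae_iff]
    exact hμ j
  -- integrability of continuous functions w.r.t. `μ j`
  have hint : ∀ j (f : ℂ → ℂ), Continuous f → Integrable f (μ j) := fun j f hf =>
    (memLp_of_compact (hKc j) (haeK j) hf 1).integrable le_rfl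
  have hPcont : ∀ j, Continuous fun t : ℂ => (starRingEnd ℂ) ((P j).eval t) := fun j =>
    Complex.continuous_conj.comp (P j).continuous
  -- Part 1 computation
  have h1 : (∫ z : Fin n → ℂ, ‖∏ j, (P j).eval (z j)‖ ^ 2 ∂(Measure.pi μ))
      = ∏ j, ∫ t, ‖(P j).eval t‖ ^ 2 ∂(μ j) := by
    have heq : (fun z : Fin n → ℂ => ‖∏ j, (P j).eval (z j)‖ ^ 2)
        = fun z : Fin n → ℂ => ∏ j, ‖(P j).eval (z j)‖ ^ 2 := by
      funext z
      rw [norm_prod, Finset.prod_pow]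
    rw [heq]
    exact pi_integral_prod μ fun j t => ‖(P j).eval t‖ ^ 2
  -- conjugated orthogonality
  have horth' : ∀ j (q : Polynomial ℂ), q.degree < ((α j : ℕ) : WithBot ℕ) →
      ∫ t, q.eval t * (starRingEnd ℂ) ((P j).eval t) ∂(μ j) = 0 := by
    intro j q hq
    calc ∫ t, q.eval t * (starRingEnd ℂ) ((P j).eval t) ∂(μ j)
        = ∫ t, (starRingEnd ℂ) ((P j).eval t * (starRingEnd ℂ) (q.eval t)) ∂(μ j) := by
          congr 1
          funext t
          rw [map_mul, Complex.conj_conj, mul_comm]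
      _ = (starRingEnd ℂ) (∫ t, (P j).eval t * (starRingEnd ℂ) (q.eval t) ∂(μ j)) :=
          integral_conj
      _ = 0 := by rw [horth j q hq, map_zero]
  -- moments of order `< α j` vanish
  have hIlt : ∀ j m, m < α j →
      (∫ t, t ^ m * (starRingEnd ℂ) ((P j).eval t) ∂(μ j)) = 0 := by
    intro j m hm
    have h := horth' j (Polynomial.X ^ m) (by
      rw [Polynomial.degree_X_pow]
      exact_mod_cast hm)
    simpa using h
  -- the `α j`-th moment equals the squared norm
  have hIeq : ∀ j, (∫ t, t ^ (α j) * (starRingEnd ℂ) ((P j).eval t) ∂(μ j))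
      = ((∫ t, ‖(P j).eval t‖ ^ 2 ∂(μ j) : ℝ) : ℂ) := by
    intro j
    set q : Polynomial ℂ := P j - Polynomial.X ^ (α j) with hqdef
    have h0 : (P j) ≠ 0 := (hmonic j).ne_zero
    have hdegP : (P j).degree = ((α j : ℕ) : WithBot ℕ) := by
      rw [Polynomial.degree_eq_natDegree h0, hdeg j]
    have hqdeg : q.degree < ((α j : ℕ) : WithBot ℕ) := by
      have h := Polynomial.degree_sub_lt (p := P j) (q := Polynomial.X ^ (α j))
        (by rw [hdegP, Polynomial.degree_X_pow]) h0
        (by rw [(hmonic j).leadingCoeff, Polynomial.leadingCoeff_X_pow])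
      rwa [hdegP] at h
    have hiP : Integrable (fun t : ℂ => (P j).eval t * (starRingEnd ℂ) ((P j).eval t)) (μ j) :=
      hint j _ ((P j).continuous.mul (hPcont j))
    have hiq : Integrable (fun t : ℂ => q.eval t * (starRingEnd ℂ) ((P j).eval t)) (μ j) :=
      hint j _ (q.continuous.mul (hPcont j))
    have hsplit : (fun t : ℂ => t ^ (α j) * (starRingEnd ℂ) ((P j).eval t))
        = fun t : ℂ => (P j).eval t * (starRingEnd ℂ) ((P j).eval t)
            - q.eval t * (starRingEnd ℂ) ((P j).eval t) := by
      funext t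
      rw [← sub_mul]
      congr 2
      simp [hqdef]
    rw [hsplit, integral_sub hiP hiq, horth' j q hqdeg, sub_zero]
    have habs : (fun t : ℂ => (P j).eval t * (starRingEnd ℂ) ((P j).eval t))
        = fun t : ℂ => ((‖(P j).eval t‖ ^ 2 : ℝ) : ℂ) := by
      funext t
      rw [Complex.mul_conj, Complex.normSq_eq_norm_sq]
    rw [habs]
    exact integral_ofReal
  refine ⟨?_, ?_⟩
  · rw [h1]
    exact sqrt_finset_prod _ _ hNnn
  -- Part 2
  intro Q hQ
  rw [ge_iff_le, ← sqrt_finset_prod Finset.univ _ hNnn]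
  set G : (Fin n → ℂ) → ℂ := fun z => ∏ j, (P j).eval (z j) with hGdef
  -- the inner product of `Q` with `G`
  have key : (∫ z : Fin n → ℂ, eval z Q * (starRingEnd ℂ) (G z) ∂(Measure.pi μ))
      = ((∏ j, ∫ t, ‖(P j).eval t‖ ^ 2 ∂(μ j) : ℝ) : ℂ) := by
    have hexp : (fun z : Fin n → ℂ => eval z Q * (starRingEnd ℂ) (G z))
        = fun z : Fin n → ℂ => ∑ β ∈ Q.support,
            Q.coeff β * ∏ j, (z j ^ β j * (starRingEnd ℂ) ((P j).eval (z j))) := by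
      funext z
      rw [eval_eq' z Q, Finset.sum_mul]
      refine Finset.sum_congr rfl fun β _ => ?_
      rw [mul_assoc]
      congr 1
      rw [hGdef, map_prod, ← Finset.prod_mul_distrib]
    have hintβ : ∀ β : Fin n →₀ ℕ, Integrable
        (fun z : Fin n → ℂ => Q.coeff β * ∏ j, (z j ^ β j * (starRingEnd ℂ) ((P j).eval (z j))))
        (Measure.pi μ) := by
      intro β
      exact (pi_integrable_prod μ fun i =>
        hint i _ ((continuous_pow (β i)).mul (hPcont i))).const_mul _
    rw [hexp, integral_finset_sum _ fun β _ => hintβ β]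
    have hterm : ∀ β : Fin n →₀ ℕ,
        (∫ z : Fin n → ℂ, Q.coeff β * ∏ j, (z j ^ β j * (starRingEnd ℂ) ((P j).eval (z j)))
            ∂(Measure.pi μ))
          = Q.coeff β * ∏ j, ∫ t, t ^ β j * (starRingEnd ℂ) ((P j).eval t) ∂(μ j) := by
      intro β
      rw [integral_const_mul, pi_integral_prod μ
        fun j t => t ^ β j * (starRingEnd ℂ) ((P j).eval t)]
    simp_rw [hterm]
    have hαmem : α ∈ Q.support := by
      rw [MvPolynomial.mem_support_iff, hQ.1]
      exact one_ne_zero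
    rw [Finset.sum_eq_single_of_mem α hαmem ?side]
    · rw [hQ.1, one_mul]
      push_cast
      exact Finset.prod_congr rfl fun j _ => hIeq j
    case side =>
      intro β hβs hβne
      obtain ⟨k, hk⟩ := (hQ.2 β hβne (MvPolynomial.mem_support_iff.mp hβs)).exists_coord_lt
      rw [Finset.prod_eq_zero (Finset.mem_univ k) (hIlt k (β k) hk), mul_zero]
  -- Cauchy–Schwarz
  have hBnn : (0:ℝ) ≤ ∏ j, ∫ t, ‖(P j).eval t‖ ^ 2 ∂(μ j) :=
    Finset.prod_nonneg fun j _ => hNnn j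
  have hAnn : (0:ℝ) ≤ ∫ z : Fin n → ℂ, ‖eval z Q‖ ^ 2 ∂(Measure.pi μ) :=
    integral_nonneg fun z => sq_nonneg _
  have haeν : ∀ᵐ z ∂(Measure.pi μ), z ∈ Set.pi Set.univ K := by
    have h : ∀ j, ∀ᵐ z ∂(Measure.pi μ), z j ∈ K j := by
      intro j
      have h0 : Measure.pi μ (Function.eval j ⁻¹' (K j)ᶜ) = 0 :=
        Measure.pi_eval_preimage_null μ (hμ j)
      rw [ae_iff]
      exact h0
    have := (ae_all_iff).mpr h
    filter_upwards [this] with z hz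
    rw [Set.mem_univ_pi]
    exact hz
  have hKpic : IsCompact (Set.pi Set.univ K) := isCompact_univ_pi hKc
  have hQcont : Continuous fun z : Fin n → ℂ => eval z Q := MvPolynomial.continuous_eval Q
  have hGcont : Continuous G := by
    rw [hGdef]
    exact continuous_finset_prod _ fun j _ => (P j).continuous.comp (continuous_apply j)
  have hQ2 : MemLp (fun z : Fin n → ℂ => eval z Q) (ENNReal.ofReal 2) (Measure.pi μ) :=
    memLp_of_compact hKpic haeν hQcont _
  have hG2 : MemLp G (ENNReal.ofReal 2) (Measure.pi μ) :=
    memLp_of_compact hKpic haeν hGcont _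
  have hCS : ∫ z, ‖eval z Q‖ * ‖G z‖ ∂(Measure.pi μ)
      ≤ (∫ z, ‖eval z Q‖ ^ (2:ℝ) ∂(Measure.pi μ)) ^ ((1:ℝ)/2)
        * (∫ z, ‖G z‖ ^ (2:ℝ) ∂(Measure.pi μ)) ^ ((1:ℝ)/2) :=
    integral_mul_norm_le_Lp_mul_Lq ⟨by norm_num, by norm_num, by norm_num⟩ hQ2 hG2
  -- rewrite the right-hand side of Cauchy–Schwarz via square roots
  have hQnorm : (∫ z, ‖eval z Q‖ ^ (2:ℝ) ∂(Measure.pi μ)) ^ ((1:ℝ)/2)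
      = Real.sqrt (∫ z : Fin n → ℂ, ‖eval z Q‖ ^ 2 ∂(Measure.pi μ)) := by
    rw [Real.sqrt_eq_rpow]
    congr 1
    refine integral_congr_ae (Eventually.of_forall fun z => ?_)
    simp only [Real.rpow_two]
  have hGnorm : (∫ z, ‖G z‖ ^ (2:ℝ) ∂(Measure.pi μ)) ^ ((1:ℝ)/2)
      = Real.sqrt (∏ j, ∫ t, ‖(P j).eval t‖ ^ 2 ∂(μ j)) := by
    rw [← h1, Real.sqrt_eq_rpow]
    congr 1
    refine integral_congr_ae (Eventually.of_forall fun z => ?_)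
    simp only [Real.rpow_two, hGdef]
  -- the inner product has modulus `∏ N j`
  have hmod : (∏ j, ∫ t, ‖(P j).eval t‖ ^ 2 ∂(μ j))
      ≤ ∫ z, ‖eval z Q‖ * ‖G z‖ ∂(Measure.pi μ) := by
    have h2 : (∏ j, ∫ t, ‖(P j).eval t‖ ^ 2 ∂(μ j))
        = ‖∫ z : Fin n → ℂ, eval z Q * (starRingEnd ℂ) (G z) ∂(Measure.pi μ)‖ := by
      rw [key, Complex.norm_real, Real.norm_of_nonneg hBnn]
    rw [h2]
    refine le_trans (norm_integral_le_integral_norm _) (le_of_eq ?_)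
    refine integral_congr_ae (Eventually.of_forall fun z => ?_)
    simp only [norm_mul, RCLike.norm_conj]
  have hchain : (∏ j, ∫ t, ‖(P j).eval t‖ ^ 2 ∂(μ j))
      ≤ Real.sqrt (∫ z : Fin n → ℂ, ‖eval z Q‖ ^ 2 ∂(Measure.pi μ))
        * Real.sqrt (∏ j, ∫ t, ‖(P j).eval t‖ ^ 2 ∂(μ j)) := by
    refine hmod.trans (hCS.trans (le_of_eq ?_))
    rw [hQnorm, hGnorm]
  rcases eq_or_lt_of_le hBnn with h0 | h0
  · rw [← h0, Real.sqrt_zero]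
    exact Real.sqrt_nonneg _
  · have hsB : 0 < Real.sqrt (∏ j, ∫ t, ‖(P j).eval t‖ ^ 2 ∂(μ j)) :=
      Real.sqrt_pos.mpr h0
    have h3 := hchain
    nth_rewrite 1 [← Real.mul_self_sqrt hBnn] at h3
    exact le_of_mul_le_mul_right h3 hsB
end
end

section
/- Let α ∈ ℕ^n and for each j = 1,…,n let x^{(j)}_0, x^{(j)}_1, …, x^{(j)}_{α_j} be pairwise distinct real numbers; set v_j'(x^{(j)}_i) := Π_{l ≠ i} (x^{(j)}_i − x^{(j)}_l) (with v_j'(x^{(j)}_0) := 1 when α_j = 0). For each grid point ξ = (x^{(1)}_{k_1},…,x^{(n)}_{k_n}) with 0 ≤ k_j ≤ α_j, set c(ξ) := Π_{j=1}^n 1 / v_j'(x^{(j)}_{k_j}). Then Σ_{ξ} c(ξ) ξ^α = 1, where the sum is over all Π_j (α_j + 1) grid points, and Σ_{ξ} c(ξ) ξ^β = 0 for every β ∈ ℕ^n such that β_k < α_k for some index k. In particular Σ_ξ c(ξ) G(ξ) = 0 for every polynomial G of total degree at most |α| whose coefficient on x^α is zero. -/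
open MvPolynomial

noncomputable section

open Polynomial Finset in
private lemma dd_leadingCoeff_basis {m : ℕ} (x : Fin (m+1) → ℝ)
    (k : Fin (m+1)) :
    (Lagrange.basis Finset.univ x k).leadingCoeff = ∏ l ∈ Finset.univ.erase k, (x k - x l)⁻¹ := by
  rw [Lagrange.basis, leadingCoeff_prod]
  refine Finset.prod_congr rfl fun j hj => ?_
  rw [Lagrange.basisDivisor, leadingCoeff_mul, leadingCoeff_C, (monic_X_sub_C _).leadingCoeff,
    mul_one]

open Polynomial Finset in
private lemma dd_coeff_basis {m : ℕ} (x : Fin (m+1) → ℝ) (hx : Function.Injective x)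
    (k : Fin (m+1)) :
    (Lagrange.basis Finset.univ x k).coeff m = ∏ l ∈ Finset.univ.erase k, (x k - x l)⁻¹ := by
  have h := Lagrange.natDegree_basis (hx.injOn) (Finset.mem_univ k)
  simp only [Finset.card_univ, Fintype.card_fin, Nat.add_sub_cancel] at h
  rw [← dd_leadingCoeff_basis x, leadingCoeff, h]

open Polynomial Finset in
private lemma dd_uni {m : ℕ} (x : Fin (m+1) → ℝ) (hx : Function.Injective x) (e : ℕ)
    (he : e ≤ m) :
    ∑ k, x k ^ e * (∏ l ∈ Finset.univ.erase k, (x k - x l))⁻¹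
      = if e = m then 1 else 0 := by
  have hdeg : (Polynomial.X ^ e : ℝ[X]).degree < (Finset.univ : Finset (Fin (m+1))).card := by
    simp [Polynomial.degree_X_pow]
    exact_mod_cast Nat.lt_succ_of_le he
  have hinterp := Lagrange.eq_interpolate (f := (Polynomial.X ^ e : ℝ[X])) hx.injOn hdeg
  have h2 := congrArg (fun p => Polynomial.coeff p m) hinterp
  simp only [Lagrange.interpolate_apply, Polynomial.finset_sum_coeff, Polynomial.coeff_C_mul,
    Polynomial.eval_pow, Polynomial.eval_X, Polynomial.coeff_X_pow] at h2
  rw [eq_comm] at h2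
  rw [show (if e = m then (1:ℝ) else 0) = if m = e then 1 else 0 by
    by_cases h : e = m <;> simp [h, Ne.symm, eq_comm], ← h2]
  refine Finset.sum_congr rfl fun k _ => ?_
  rw [dd_coeff_basis x hx k, Finset.prod_inv_distrib]

private lemma dd_factor {n : ℕ} (α : Fin n → ℕ)
    (x : (j : Fin n) → Fin (α j + 1) → ℝ) (β : Fin n → ℕ) :
    ∑ k : (j : Fin n) → Fin (α j + 1),
        (∏ j, (∏ l ∈ Finset.univ.erase (k j), (x j (k j) - x j l))⁻¹) *
          ∏ j, x j (k j) ^ β j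
      = ∏ j, ∑ i, x j i ^ β j * (∏ l ∈ Finset.univ.erase i, (x j i - x j l))⁻¹ := by
  rw [Finset.prod_univ_sum (fun j => (Finset.univ : Finset (Fin (α j + 1))))]
  rw [Fintype.piFinset_univ]
  refine Finset.sum_congr rfl fun k _ => ?_
  rw [← Finset.prod_mul_distrib]
  exact Finset.prod_congr rfl fun j _ => mul_comm _ _

private lemma dd_beta {n : ℕ} (α : Fin n → ℕ)
    (x : (j : Fin n) → Fin (α j + 1) → ℝ) (hx : ∀ j, Function.Injective (x j))
    (β : Fin n → ℕ) (hβ : ∃ i, β i < α i) :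
    ∑ k : (j : Fin n) → Fin (α j + 1),
        (∏ j, (∏ l ∈ Finset.univ.erase (k j), (x j (k j) - x j l))⁻¹) *
          ∏ j, x j (k j) ^ β j = 0 := by
  obtain ⟨i, hi⟩ := hβ
  rw [dd_factor]
  apply Finset.prod_eq_zero (Finset.mem_univ i)
  rw [dd_uni (x i) (hx i) (β i) (le_of_lt hi), if_neg (Nat.ne_of_lt hi)]

/-- divided-difference identities on a product grid. With distinct real
nodes `x (j) 0, …, x (j) (α j)` in each variable, weights
`c ξ = ∏_j 1 / v_j'(x (j) (k j))`, the weighted sum of `ξ^α` over the grid equals `1`,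
the weighted sum of `ξ^β` vanishes whenever `β_k < α_k` for some `k`, and consequently
the weighted sum of `G(ξ)` vanishes for every polynomial `G` of total degree at most
`|α|` with zero coefficient on `x^α`. -/
theorem divided_difference_grid {n : ℕ} (α : Fin n → ℕ)
    (x : (j : Fin n) → Fin (α j + 1) → ℝ) (hx : ∀ j, Function.Injective (x j)) :
    (∑ k : (j : Fin n) → Fin (α j + 1),
        (∏ j, (∏ l ∈ Finset.univ.erase (k j), (x j (k j) - x j l))⁻¹) *
          ∏ j, x j (k j) ^ α j = 1) ∧
    (∀ β : Fin n → ℕ, (∃ i, β i < α i) →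
      ∑ k : (j : Fin n) → Fin (α j + 1),
        (∏ j, (∏ l ∈ Finset.univ.erase (k j), (x j (k j) - x j l))⁻¹) *
          ∏ j, x j (k j) ^ β j = 0) ∧
    (∀ G : MvPolynomial (Fin n) ℝ, G.totalDegree ≤ ∑ j, α j →
      G.coeff (Finsupp.equivFunOnFinite.symm α) = 0 →
      ∑ k : (j : Fin n) → Fin (α j + 1),
        (∏ j, (∏ l ∈ Finset.univ.erase (k j), (x j (k j) - x j l))⁻¹) *
          eval (fun j => x j (k j)) G = 0) := by
  refine ⟨?_, fun β hβ => dd_beta α x hx β hβ, ?_⟩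
  · rw [dd_factor]
    apply Finset.prod_eq_one
    intro j _
    rw [dd_uni (x j) (hx j) (α j) le_rfl, if_pos rfl]
  · intro G hdeg hcoeff
    have heval : ∀ k : (j : Fin n) → Fin (α j + 1),
        eval (fun j => x j (k j)) G = ∑ d ∈ G.support, G.coeff d * ∏ j, x j (k j) ^ d j :=
      fun k => eval_eq' _ G
    simp_rw [heval, Finset.mul_sum]
    rw [Finset.sum_comm]
    apply Finset.sum_eq_zero
    intro d hd
    by_cases hdα : d = Finsupp.equivFunOnFinite.symm α
    · rw [← hdα] at hcoeff
      simp [hcoeff]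
    · have hβ : ∃ i, d i < α i := by
        by_contra hcon
        push_neg at hcon
        have hsum : ∑ j, (d j : ℕ) ≤ ∑ j, α j := by
          refine le_trans (le_of_eq ?_) (le_trans (MvPolynomial.le_totalDegree hd) hdeg)
          rw [Finsupp.sum_fintype]
          exact fun _ => rfl
        have h1 : ∑ j, α j ≤ ∑ j, (d j : ℕ) := Finset.sum_le_sum fun i _ => hcon i
        have heq := (Finset.sum_eq_sum_iff_of_le fun i (_ : i ∈ Finset.univ) => hcon i).mp
          (le_antisymm h1 hsum)
        apply hdα
        ext j
        simp [Finsupp.equivFunOnFinite, ← heq j (Finset.mem_univ j)]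
        rfl
      have hzero := dd_beta α x hx (fun j => d j) hβ
      calc ∑ k : (j : Fin n) → Fin (α j + 1),
            (∏ j, (∏ l ∈ Finset.univ.erase (k j), (x j (k j) - x j l))⁻¹) *
              (G.coeff d * ∏ j, x j (k j) ^ d j)
          = G.coeff d * ∑ k : (j : Fin n) → Fin (α j + 1),
            (∏ j, (∏ l ∈ Finset.univ.erase (k j), (x j (k j) - x j l))⁻¹) *
              ∏ j, x j (k j) ^ d j := by
            rw [Finset.mul_sum]; exact Finset.sum_congr rfl fun k _ => by ring
        _ = 0 := by rw [hzero, mul_zero]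
end
end

section
/- For j = 1,…,n let K_j ⊂ ℝ be a nonempty compact set and ŵ_j : K_j → [0,∞) a bounded function; set K = K_1 × ⋯ × K_n and ŵ(x_1,…,x_n) = ŵ_1(x_1)⋯ŵ_n(x_n). Let α ∈ ℕ^n and for each j let T_j be a monic real polynomial of degree α_j with M_j := sup_{t∈K_j} ŵ_j(t)|T_j(t)| > 0, and suppose there exist points x^{(j)}_0 > x^{(j)}_1 > ⋯ > x^{(j)}_{α_j} in K_j such that ŵ_j(x^{(j)}_k) T_j(x^{(j)}_k) = (−1)^k M_j for k = 0,…,α_j (for α_j = 0 this means T_j = 1 and ŵ_j attains its supremum M_j > 0 at some point of K_j). Then Q(x_1,…,x_n) := Π_{j=1}^n T_j(x_j) is a weighted Chebyshev polynomial for ŵ on K: for every polynomial P (with complex coefficients) whose coefficient on x^α is 1 and whose total degree is at most |α|, sup_{x∈K} |P(x)| ŵ(x) ≥ sup_{x∈K} |Q(x)| ŵ(x) = M_1 ⋯ M_n. -/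
open MvPolynomial

noncomputable section

section Aux
open Polynomial Finset


lemma leadingCoeff_lagrange_basis {F : Type*} [Field F] {ι : Type*} [DecidableEq ι]
    (s : Finset ι) (v : ι → F) (hvs : Set.InjOn v s) {i : ι} (hi : i ∈ s) :
    (Lagrange.basis s v i).coeff (#s - 1) = Lagrange.nodalWeight s v i := by
  have hdeg := Lagrange.natDegree_basis hvs hi
  rw [← hdeg, Polynomial.coeff_natDegree, Lagrange.basis, Polynomial.leadingCoeff_prod,
    Lagrange.nodalWeight]
  refine Finset.prod_congr rfl fun j hj => ?_
  rw [Lagrange.basisDivisor, Polynomial.leadingCoeff_mul,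
    Polynomial.leadingCoeff_C, (Polynomial.monic_X_sub_C _).leadingCoeff, mul_one]

lemma nodalWeight_powsum {F : Type*} [Field F] {m : ℕ} (x : Fin (m+1) → F)
    (hx : Function.Injective x) (r : ℕ) (hr : r ≤ m) :
    ∑ k, Lagrange.nodalWeight Finset.univ x k * x k ^ r = if r = m then 1 else 0 := by
  have hinj : Set.InjOn x (Finset.univ : Finset (Fin (m+1))) := hx.injOn
  have hcard : #(Finset.univ : Finset (Fin (m+1))) = m + 1 := by simp
  have hdlt : (Polynomial.X ^ r : F[X]).degree < #(Finset.univ : Finset (Fin (m+1))) := by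
    rw [hcard]
    exact lt_of_le_of_lt (Polynomial.degree_X_pow_le r) (by exact_mod_cast Nat.lt_succ_of_le hr)
  have h1 : (Polynomial.X ^ r : F[X]) = Lagrange.interpolate Finset.univ x (fun k => x k ^ r) := by
    have := Lagrange.eq_interpolate (f := (Polynomial.X ^ r : F[X])) hinj hdlt
    simpa using this
  have h2 := congrArg (fun p => Polynomial.coeff p m) h1
  simp only [Polynomial.coeff_X_pow] at h2
  rw [Lagrange.interpolate_apply, Polynomial.finset_sum_coeff] at h2
  have h3 : ∀ k : Fin (m+1), ((Polynomial.C (x k ^ r) * Lagrange.basis Finset.univ x k).coeff m)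
      = Lagrange.nodalWeight Finset.univ x k * x k ^ r := by
    intro k
    rw [Polynomial.coeff_C_mul]
    have := leadingCoeff_lagrange_basis Finset.univ x hinj (Finset.mem_univ k)
    rw [hcard] at this
    simp only [Nat.add_sub_cancel] at this
    rw [this, mul_comm]
  calc ∑ k, Lagrange.nodalWeight Finset.univ x k * x k ^ r
      = ∑ k, ((Polynomial.C (x k ^ r) * Lagrange.basis Finset.univ x k).coeff m) := by
        exact (Finset.sum_congr rfl fun k _ => (h3 k).symm)
    _ = if r = m then 1 else 0 := by
        rw [← h2]; by_cases h : r = m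
        · subst h; simp
        · rw [if_neg (fun hh => h hh.symm), if_neg h]

lemma nodalWeight_sign {m : ℕ} (x : Fin (m+1) → ℝ) (hx : StrictAnti x) (k : Fin (m+1)) :
    0 < (-1:ℝ)^(k:ℕ) * Lagrange.nodalWeight Finset.univ x k := by
  rw [Lagrange.nodalWeight]
  have h1 : ((-1:ℝ)^(k:ℕ)) = ((-1:ℝ)^(k:ℕ))⁻¹ := by
    rw [← inv_pow, inv_neg, inv_one]
  rw [h1, Finset.prod_inv_distrib, ← mul_inv, inv_pos]
  have hsplit : (Finset.univ.erase k : Finset (Fin (m+1))) = Finset.Iio k ∪ Finset.Ioi k := by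
    ext i
    simp only [Finset.mem_erase, Finset.mem_univ, and_true, Finset.mem_union,
      Finset.mem_Iio, Finset.mem_Ioi]
    exact ne_iff_lt_or_gt
  have hdisj : Disjoint (Finset.Iio k) (Finset.Ioi k) := by
    rw [Finset.disjoint_left]
    intro i hi hi'
    exact absurd (Finset.mem_Ioi.mp hi') (not_lt.mpr (le_of_lt (Finset.mem_Iio.mp hi)))
  rw [hsplit, Finset.prod_union hdisj]
  have hIoi : 0 < ∏ i ∈ Finset.Ioi k, (x k - x i) :=
    Finset.prod_pos fun i hi => sub_pos.mpr (hx (Finset.mem_Ioi.mp hi))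
  have hIio : ∏ i ∈ Finset.Iio k, (x k - x i)
      = (-1:ℝ)^(k:ℕ) * ∏ i ∈ Finset.Iio k, (x i - x k) := by
    rw [← Fin.card_Iio k, ← Finset.prod_const, ← Finset.prod_mul_distrib]
    exact Finset.prod_congr rfl fun i _ => by ring
  rw [hIio]
  have hsq : (-1:ℝ)^(k:ℕ) * (-1:ℝ)^(k:ℕ) = 1 := by
    rw [← pow_add, ← two_mul, pow_mul, neg_one_sq, one_pow]
  calc (0:ℝ) < (∏ i ∈ Finset.Iio k, (x i - x k)) * ∏ i ∈ Finset.Ioi k, (x k - x i) :=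
        mul_pos (Finset.prod_pos fun i hi => sub_pos.mpr (hx (Finset.mem_Iio.mp hi))) hIoi
    _ = (-1:ℝ)^(k:ℕ) * (((-1:ℝ)^(k:ℕ) * ∏ i ∈ Finset.Iio k, (x i - x k))
        * ∏ i ∈ Finset.Ioi k, (x k - x i)) := by rw [← mul_assoc, ← mul_assoc, hsq, one_mul]

lemma cheb_1d {m : ℕ} (x : Fin (m+1) → ℝ) (hx : StrictAnti x)
    (T : Polynomial ℝ) (hT : T.Monic) (hTd : T.natDegree = m)
    (w : ℝ → ℝ) (M : ℝ) (hMpos : 0 < M) (hwnn : ∀ k, 0 ≤ w (x k))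
    (halt : ∀ k : Fin (m+1), w (x k) * T.eval (x k) = (-1:ℝ)^(k:ℕ) * M) :
    (∀ k, 0 < w (x k)) ∧
    ∑ k, |Lagrange.nodalWeight Finset.univ x k| / w (x k) = M⁻¹ := by
  set c : Fin (m+1) → ℝ := fun k => Lagrange.nodalWeight Finset.univ x k with hc
  have hinj : Function.Injective x := hx.injective
  have hwpos : ∀ k, 0 < w (x k) := by
    intro k
    rcases (hwnn k).lt_or_eq with h | h
    · exact h
    · exfalso
      have := halt k
      rw [← h, zero_mul] at this
      have h2 : (-1:ℝ)^(k:ℕ) * M ≠ 0 := by positivity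
      exact h2 this.symm
  refine ⟨hwpos, ?_⟩
  have hkey : ∑ k, c k * T.eval (x k) = 1 := by
    have heval : ∀ t : ℝ, T.eval t = ∑ r ∈ Finset.range (m+1), T.coeff r * t^r := by
      intro t
      rw [Polynomial.eval_eq_sum_range, hTd]
    calc ∑ k, c k * T.eval (x k)
        = ∑ k, ∑ r ∈ Finset.range (m+1), T.coeff r * (c k * x k ^ r) := by
          refine Finset.sum_congr rfl fun k _ => ?_
          rw [heval, Finset.mul_sum]
          exact Finset.sum_congr rfl fun r _ => by ring
      _ = ∑ r ∈ Finset.range (m+1), T.coeff r * ∑ k, c k * x k ^ r := by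
          rw [Finset.sum_comm]
          exact Finset.sum_congr rfl fun r _ => by rw [Finset.mul_sum]
      _ = 1 := by
          have : ∀ r ∈ Finset.range (m+1), T.coeff r * (∑ k, c k * x k ^ r)
              = if r = m then 1 else 0 := by
            intro r hr
            rw [hc, nodalWeight_powsum x hinj r (Nat.lt_succ_iff.mp (Finset.mem_range.mp hr))]
            by_cases h : r = m
            · subst h
              simp [← hTd, Polynomial.Monic.coeff_natDegree hT]
            · rw [if_neg h, mul_zero]
          rw [Finset.sum_congr rfl this]
          simp
  have hterm : ∀ k, c k * T.eval (x k) = |c k| * M / w (x k) := by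
    intro k
    have hT' : T.eval (x k) = (-1:ℝ)^(k:ℕ) * M / w (x k) :=
      (eq_div_iff (ne_of_gt (hwpos k))).mpr (by rw [mul_comm]; exact halt k)
    have habs : |c k| = (-1:ℝ)^(k:ℕ) * c k := by
      have hs := nodalWeight_sign x hx k
      rw [← abs_of_pos hs, abs_mul, abs_pow, abs_neg, abs_one, one_pow, one_mul]
    calc c k * T.eval (x k) = ((-1:ℝ)^(k:ℕ) * c k) * M / w (x k) := by rw [hT']; ring
      _ = |c k| * M / w (x k) := by rw [← habs]
  have : ∑ k, |c k| * M / w (x k) = 1 := by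
    rw [← Finset.sum_congr rfl fun k _ => hterm k, hkey]
  have h4 : M * ∑ k, |c k| / w (x k) = 1 := by
    rw [Finset.mul_sum, ← this]
    exact Finset.sum_congr rfl fun k _ => by ring
  exact eq_inv_of_mul_eq_one_right h4

end Aux

/-- Theorem 4.5: if each `T j` is a monic real polynomial of degree `α j`
satisfying the weighted alternation property on `K j ⊂ ℝ` with value `M j > 0`, then
`Q(x) = ∏_j T j (x j)` is a weighted Chebyshev polynomial for
`ŵ(x) = ∏_j ŵ_j (x j)` on `K = K₁ × ⋯ × Kₙ`: every complex polynomial `P` with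
coefficient `1` on `x^α` and total degree at most `|α|` satisfies
`sup_K |P| ŵ ≥ sup_K |Q| ŵ = M₁ ⋯ Mₙ`. -/
theorem prod_weighted_chebyshev {n : ℕ}
    (K : Fin n → Set ℝ) (hKc : ∀ j, IsCompact (K j)) (hKne : ∀ j, (K j).Nonempty)
    (w : Fin n → ℝ → ℝ)
    (hw_nonneg : ∀ j, ∀ t ∈ K j, 0 ≤ w j t) (hw_bdd : ∀ j, ∃ C, ∀ t ∈ K j, w j t ≤ C)
    (α : Fin n →₀ ℕ)
    (T : Fin n → Polynomial ℝ)
    (hmonic : ∀ j, (T j).Monic) (hdeg : ∀ j, (T j).natDegree = α j)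
    (M : Fin n → ℝ)
    (hM : ∀ j, M j = sSup ((fun t => w j t * |(T j).eval t|) '' K j))
    (hMpos : ∀ j, 0 < M j)
    (halt : ∀ j, ∃ x : Fin (α j + 1) → ℝ, StrictAnti x ∧ (∀ k, x k ∈ K j) ∧
      ∀ k : Fin (α j + 1), w j (x k) * (T j).eval (x k) = (-1 : ℝ) ^ (k : ℕ) * M j) :
    (∀ P : MvPolynomial (Fin n) ℂ, P.coeff α = 1 → P.totalDegree ≤ ∑ j, α j →
      sSup ((fun x : Fin n → ℝ =>
          ‖eval (fun j => (x j : ℂ)) P‖ * ∏ j, w j (x j)) ''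
            Set.univ.pi K) ≥
        sSup ((fun x : Fin n → ℝ =>
          |∏ j, (T j).eval (x j)| * ∏ j, w j (x j)) '' Set.univ.pi K)) ∧
    sSup ((fun x : Fin n → ℝ =>
        |∏ j, (T j).eval (x j)| * ∏ j, w j (x j)) '' Set.univ.pi K) = ∏ j, M j := by
  classical
  choose xs hxs_anti hxs_mem hxs_alt using halt
  have h1d := fun j => cheb_1d (xs j) (hxs_anti j) (T j) (hmonic j) (hdeg j) (w j) (M j)
    (hMpos j) (fun k => hw_nonneg j _ (hxs_mem j k)) (hxs_alt j)
  have hwpos : ∀ j k, 0 < w j (xs j k) := fun j => (h1d j).1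
  set c : (j : Fin n) → Fin (α j + 1) → ℝ :=
    fun j k => Lagrange.nodalWeight Finset.univ (xs j) k with hc
  have hcsum : ∀ j, ∑ k, |c j k| / w j (xs j k) = (M j)⁻¹ := fun j => (h1d j).2
  -- boundedness of the 1-D weighted functions, and M j is an upper bound
  have hfj_bdd : ∀ j, BddAbove ((fun t => w j t * |(T j).eval t|) '' K j) := by
    intro j
    obtain ⟨C, hC⟩ := hw_bdd j
    obtain ⟨B, hB⟩ := (hKc j).exists_bound_of_continuousOn ((T j).continuous.continuousOn)
    refine ⟨max C 0 * B, ?_⟩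
    rintro v ⟨t, ht, rfl⟩
    have h1 : |(T j).eval t| ≤ B := by
      have := hB t ht; rwa [Real.norm_eq_abs] at this
    exact mul_le_mul (le_trans (hC t ht) (le_max_left C 0)) h1 (abs_nonneg _) (le_max_right C 0)
  have hfj_le : ∀ j, ∀ t ∈ K j, w j t * |(T j).eval t| ≤ M j := by
    intro j t ht
    rw [hM j]
    exact le_csSup (hfj_bdd j) ⟨t, ht, rfl⟩
  -- the product function equals the product of the 1-D functions
  have hfQ_eq : ∀ x : Fin n → ℝ,
      |∏ j, (T j).eval (x j)| * ∏ j, w j (x j) = ∏ j, (w j (x j) * |(T j).eval (x j)|) := by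
    intro x
    rw [Finset.abs_prod, Finset.prod_mul_distrib, mul_comm]
  -- base point of the alternation and membership
  set x0 : Fin n → ℝ := fun j => xs j 0 with hx0
  have hx0mem : x0 ∈ Set.univ.pi K := fun j _ => hxs_mem j 0
  have hfQx0 : |∏ j, (T j).eval (x0 j)| * ∏ j, w j (x0 j) = ∏ j, M j := by
    rw [hfQ_eq]
    refine Finset.prod_congr rfl fun j _ => ?_
    have h := hxs_alt j 0
    simp only [Fin.val_zero, pow_zero, one_mul] at h
    rw [← abs_of_nonneg (hw_nonneg j _ (hxs_mem j 0)), ← abs_mul, h, abs_of_pos (hMpos j)]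
  have hfQ_ub : ∀ x ∈ Set.univ.pi K,
      |∏ j, (T j).eval (x j)| * ∏ j, w j (x j) ≤ ∏ j, M j := by
    intro x hx
    rw [hfQ_eq]
    exact Finset.prod_le_prod
      (fun j _ => mul_nonneg (hw_nonneg j _ (hx j trivial)) (abs_nonneg _))
      (fun j _ => hfj_le j _ (hx j trivial))
  have hQsup : sSup ((fun x : Fin n → ℝ =>
      |∏ j, (T j).eval (x j)| * ∏ j, w j (x j)) '' Set.univ.pi K) = ∏ j, M j := by
    apply le_antisymm
    · apply csSup_le (Set.Nonempty.image _ ⟨x0, hx0mem⟩)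
      rintro v ⟨x, hx, rfl⟩
      exact hfQ_ub x hx
    · rw [← hfQx0]
      exact le_csSup ⟨∏ j, M j, by rintro v ⟨x, hx, rfl⟩; exact hfQ_ub x hx⟩
        ⟨x0, hx0mem, rfl⟩
  refine ⟨?_, hQsup⟩
  intro P hPα hPdeg
  rw [ge_iff_le, hQsup]
  -- abbreviations
  set F : (Fin n → ℝ) → ℝ := fun x =>
    ‖eval (fun j => ((x j : ℝ) : ℂ)) P‖ * ∏ j, w j (x j) with hF
  -- boundedness of the image of F
  have hcont : Continuous fun x : Fin n → ℝ => eval (fun j => ((x j : ℝ) : ℂ)) P := by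
    rw [show (fun x : Fin n → ℝ => eval (fun j => ((x j : ℝ) : ℂ)) P)
        = fun x : Fin n → ℝ => ∑ d ∈ P.support, P.coeff d * ∏ j, ((x j : ℝ) : ℂ) ^ d j
      from funext fun x => eval_eq' _ P]
    refine continuous_finset_sum _ fun d _ => Continuous.mul continuous_const ?_
    exact continuous_finset_prod _ fun j _ =>
      (Complex.continuous_ofReal.comp (continuous_apply j)).pow _
  have hKpi : IsCompact (Set.univ.pi K) := isCompact_univ_pi hKc
  have hFbdd : BddAbove (F '' Set.univ.pi K) := by
    obtain ⟨B, hB⟩ := hKpi.exists_bound_of_continuousOn hcont.continuousOn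
    have hwb : ∀ j, ∃ C, 0 ≤ C ∧ ∀ t ∈ K j, w j t ≤ C := by
      intro j
      obtain ⟨C, hC⟩ := hw_bdd j
      exact ⟨max C 0, le_max_right C 0, fun t ht => le_trans (hC t ht) (le_max_left C 0)⟩
    choose C hC0 hCle using hwb
    refine ⟨max B 0 * ∏ j, C j, ?_⟩
    rintro v ⟨x, hx, rfl⟩
    refine mul_le_mul ?_ ?_ (Finset.prod_nonneg fun j _ => hw_nonneg j _ (hx j trivial))
      (le_max_right B 0)
    · have := hB x hx
      exact le_trans this (le_max_left B 0)
    · exact Finset.prod_le_prod (fun j _ => hw_nonneg j _ (hx j trivial))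
        (fun j _ => hCle j _ (hx j trivial))
  set S := sSup (F '' Set.univ.pi K) with hS
  -- grid points
  have hptmem : ∀ g : (j : Fin n) → Fin (α j + 1),
      (fun j => xs j (g j)) ∈ Set.univ.pi K := fun g j _ => hxs_mem j (g j)
  -- power sums of the nodal weights (complex version)
  have hSval : ∀ (j : Fin n) (r : ℕ), r ≤ α j →
      ∑ k, ((c j k : ℝ) : ℂ) * ((xs j k : ℝ) : ℂ) ^ r = if r = α j then 1 else 0 := by
    intro j r hr
    have h := nodalWeight_powsum (xs j) (hxs_anti j).injective r hr
    calc ∑ k, ((c j k : ℝ) : ℂ) * ((xs j k : ℝ) : ℂ) ^ r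
        = ((∑ k, c j k * xs j k ^ r : ℝ) : ℂ) := by push_cast; rfl
      _ = ((if r = α j then (1:ℝ) else 0 : ℝ) : ℂ) := by rw [hc, h]
      _ = if r = α j then 1 else 0 := by split <;> simp
  -- the linear functional applied to P equals 1
  have hL : ∑ g : (j : Fin n) → Fin (α j + 1),
      (∏ j, ((c j (g j) : ℝ) : ℂ)) * eval (fun j => ((xs j (g j) : ℝ) : ℂ)) P = 1 := by
    have hexp : ∀ g : (j : Fin n) → Fin (α j + 1),
        (∏ j, ((c j (g j) : ℝ) : ℂ)) * eval (fun j => ((xs j (g j) : ℝ) : ℂ)) P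
        = ∑ d ∈ P.support, P.coeff d *
            ∏ j, (((c j (g j) : ℝ) : ℂ) * ((xs j (g j) : ℝ) : ℂ) ^ d j) := by
      intro g
      rw [eval_eq', Finset.mul_sum]
      refine Finset.sum_congr rfl fun d _ => ?_
      rw [Finset.prod_mul_distrib]
      ring
    have hfact : ∀ d : Fin n →₀ ℕ,
        ∑ g : (j : Fin n) → Fin (α j + 1),
            ∏ j, (((c j (g j) : ℝ) : ℂ) * ((xs j (g j) : ℝ) : ℂ) ^ d j)
        = ∏ j, ∑ k, (((c j k : ℝ) : ℂ) * ((xs j k : ℝ) : ℂ) ^ d j) := by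
      intro d
      rw [← Fintype.piFinset_univ]
      exact (Finset.prod_univ_sum (fun j => (Finset.univ : Finset (Fin (α j + 1))))
        (fun j k => ((c j k : ℝ) : ℂ) * ((xs j k : ℝ) : ℂ) ^ d j)).symm
    calc ∑ g : (j : Fin n) → Fin (α j + 1),
        (∏ j, ((c j (g j) : ℝ) : ℂ)) * eval (fun j => ((xs j (g j) : ℝ) : ℂ)) P
        = ∑ g : (j : Fin n) → Fin (α j + 1), ∑ d ∈ P.support, P.coeff d *
            ∏ j, (((c j (g j) : ℝ) : ℂ) * ((xs j (g j) : ℝ) : ℂ) ^ d j) :=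
          Finset.sum_congr rfl fun g _ => hexp g
      _ = ∑ d ∈ P.support, ∑ g : (j : Fin n) → Fin (α j + 1), P.coeff d *
            ∏ j, (((c j (g j) : ℝ) : ℂ) * ((xs j (g j) : ℝ) : ℂ) ^ d j) := Finset.sum_comm
      _ = ∑ d ∈ P.support, P.coeff d *
            ∏ j, ∑ k, (((c j k : ℝ) : ℂ) * ((xs j k : ℝ) : ℂ) ^ d j) := by
          refine Finset.sum_congr rfl fun d _ => ?_
          rw [← Finset.mul_sum, hfact d]
      _ = 1 := by
          rw [Finset.sum_eq_single_of_mem α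
            (MvPolynomial.mem_support_iff.mpr (by rw [hPα]; exact one_ne_zero))]
          · rw [hPα, one_mul]
            refine Finset.prod_eq_one fun j _ => ?_
            rw [hSval j (α j) le_rfl, if_pos rfl]
          · intro d hd hne
            have h1 := MvPolynomial.le_totalDegree hd
            have h2 : (d.sum fun _ e => e) = ∑ j, d j :=
              Finsupp.sum_fintype _ _ (fun _ => rfl)
            have hsum : ∑ j, d j ≤ ∑ j, α j := by
              rw [← h2]; exact le_trans h1 hPdeg
            have hex : ∃ j, d j < α j := by
              by_contra hno
              push_neg at hno
              apply hne
              ext j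
              refine le_antisymm ?_ (hno j)
              by_contra h3
              push_neg at h3
              have h4 : ∑ i, α i < ∑ i, d i :=
                Finset.sum_lt_sum (fun i _ => hno i) ⟨j, Finset.mem_univ j, h3⟩
              omega
            obtain ⟨j0, hj0⟩ := hex
            rw [Finset.prod_eq_zero (Finset.mem_univ j0)
              (by rw [hSval j0 (d j0) (le_of_lt hj0), if_neg (Nat.ne_of_lt hj0)]), mul_zero]
  -- the de la Vallée Poussin style bound
  have hptw : ∀ (g : (j : Fin n) → Fin (α j + 1)) (j : Fin n), w j (xs j (g j)) ≠ 0 :=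
    fun g j => ne_of_gt (hwpos j (g j))
  have hFpt_le : ∀ g : (j : Fin n) → Fin (α j + 1), F (fun j => xs j (g j)) ≤ S :=
    fun g => le_csSup hFbdd ⟨fun j => xs j (g j), hptmem g, rfl⟩
  have habs : (1:ℝ) ≤ ∑ g : (j : Fin n) → Fin (α j + 1),
      (∏ j, |c j (g j)| / w j (xs j (g j))) * S := by
    have h0 : (1:ℝ) = ‖∑ g : (j : Fin n) → Fin (α j + 1),
        (∏ j, ((c j (g j) : ℝ) : ℂ)) * eval (fun j => ((xs j (g j) : ℝ) : ℂ)) P‖ := by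
      rw [hL, norm_one]
    rw [h0]
    calc ‖∑ g : (j : Fin n) → Fin (α j + 1),
        (∏ j, ((c j (g j) : ℝ) : ℂ)) * eval (fun j => ((xs j (g j) : ℝ) : ℂ)) P‖
        ≤ ∑ g : (j : Fin n) → Fin (α j + 1),
            ‖(∏ j, ((c j (g j) : ℝ) : ℂ)) * eval (fun j => ((xs j (g j) : ℝ) : ℂ)) P‖ :=
          norm_sum_le _ _
      _ ≤ ∑ g : (j : Fin n) → Fin (α j + 1),
            (∏ j, |c j (g j)| / w j (xs j (g j))) * S := by
          refine Finset.sum_le_sum fun g _ => ?_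
          have heq : ‖(∏ j, ((c j (g j) : ℝ) : ℂ)) *
              eval (fun j => ((xs j (g j) : ℝ) : ℂ)) P‖
              = (∏ j, |c j (g j)| / w j (xs j (g j))) * F (fun j => xs j (g j)) := by
            rw [norm_mul, norm_prod]
            simp only [Complex.norm_real, Real.norm_eq_abs]
            rw [hF]
            rw [Finset.prod_div_distrib]
            have hww : (∏ j, w j (xs j (g j))) ≠ 0 :=
              Finset.prod_ne_zero_iff.mpr fun j _ => hptw g j
            field_simp
          rw [heq]
          exact mul_le_mul_of_nonneg_left (hFpt_le g)
            (Finset.prod_nonneg fun j _ => div_nonneg (abs_nonneg _) (hwpos j (g j)).le)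
  have hsum2 : ∑ g : (j : Fin n) → Fin (α j + 1),
      (∏ j, |c j (g j)| / w j (xs j (g j))) * S = (∏ j, (M j)⁻¹) * S := by
    rw [← Finset.sum_mul]
    congr 1
    calc ∑ g : (j : Fin n) → Fin (α j + 1), ∏ j, (|c j (g j)| / w j (xs j (g j)))
        = ∏ j, ∑ k, |c j k| / w j (xs j k) := by
          rw [← Fintype.piFinset_univ]
          exact (Finset.prod_univ_sum (fun j => (Finset.univ : Finset (Fin (α j + 1))))
            (fun j k => |c j k| / w j (xs j k))).symm
      _ = ∏ j, (M j)⁻¹ := Finset.prod_congr rfl fun j _ => hcsum j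
  have h1S : (1:ℝ) ≤ (∏ j, (M j)⁻¹) * S := by rw [← hsum2]; exact habs
  have hMprod : 0 < ∏ j, M j := Finset.prod_pos fun j _ => hMpos j
  have hMM : (∏ j, M j) * (∏ j, (M j)⁻¹) = 1 := by
    rw [← Finset.prod_mul_distrib]
    exact Finset.prod_eq_one fun j _ => mul_inv_cancel₀ (ne_of_gt (hMpos j))
  calc ∏ j, M j ≤ (∏ j, M j) * ((∏ j, (M j)⁻¹) * S) := le_mul_of_one_le_right hMprod.le h1S
    _ = S := by rw [← mul_assoc, hMM, one_mul]
end
end
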